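/- arXiv:0809.0941 — 2 statements merged into one kernel-verified Lean document; each statement's English description precedes it below -/
import Mathlib

section
/- Let W : [0,∞) → ℝ be a nonnegative C¹ function with W(t) ≤ K₀ for all t, and suppose there are constants λ > 0 and K₁ ≥ 2 such that W'(t) ≤ -2λ W(t) + λ √(W(t) · W(t-2)) for all t ≥ K₁. Then there exist constants C and κ > 0 (depending only on K₀, K₁, λ) such that W(t) ≤ C e^{-κ t} for all t ≥ 0. -/
open Real Set Filter
open scoped Topology

theorem decay_lemma_N1
    (W : ℝ → ℝ) (K₀ K₁ lam : ℝ)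
    (hlam : 0 < lam) (hK₁ : 2 ≤ K₁)
    (hW : ContDiff ℝ 1 W)
    (hW0 : ∀ t ≥ (0:ℝ), 0 ≤ W t)
    (hWK : ∀ t ≥ (0:ℝ), W t ≤ K₀)
    (hineq : ∀ t ≥ K₁, deriv W t ≤ -2 * lam * W t + lam * Real.sqrt (W t * W (t - 2))) :
    ∃ C κ : ℝ, 0 < κ ∧ ∀ t ≥ (0:ℝ), W t ≤ C * Real.exp (-κ * t) := by
  have hdiff : Differentiable ℝ W := hW.differentiable one_ne_zero
  have hK₀ : 0 ≤ K₀ := le_trans (hW0 0 le_rfl) (hWK 0 le_rfl)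
  set μ : ℝ := 3 * lam / 2 with hμdef
  have hμ : 0 < μ := by positivity
  -- derivative liminf condition
  have hslope : ∀ x : ℝ, ∀ r, deriv W x < r →
      ∃ᶠ z in 𝓝[>] x, (z - x)⁻¹ * (W z - W x) < r := by
    intro x r hr
    have h := (hdiff x).hasDerivAt.hasDerivWithinAt (s := Ioi x)
    rw [hasDerivWithinAt_iff_tendsto_slope] at h
    have h2 : Tendsto (slope W x) (𝓝[>] x) (𝓝 (deriv W x)) := by
      refine h.mono_left (nhdsWithin_mono x ?_)
      intro z hz; exact ⟨hz, ne_of_gt hz⟩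
    refine (h2.eventually_lt_const hr).frequently.mono ?_
    intro z hz
    rwa [slope_def_field, div_eq_inv_mul] at hz
  -- key Gronwall step
  have key : ∀ M a t : ℝ, K₁ ≤ a → a ≤ t → 0 ≤ M → (∀ s, a - 2 ≤ s → W s ≤ M) →
      W t ≤ M * Real.exp (-μ * (t - a)) + M / 3 := by
    intro M a t ha hat hM0 hMb
    have hbound : ∀ x ∈ Ico a t, deriv W x ≤ -μ * W x + lam * M / 2 := by
      intro x hx
      have hxK : K₁ ≤ x := le_trans ha hx.1
      have hx0 : (0:ℝ) ≤ x := le_trans (by linarith) hxK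
      have hx2 : (0:ℝ) ≤ x - 2 := by linarith
      have h1 : 0 ≤ W x := hW0 x hx0
      have h2 : 0 ≤ W (x - 2) := hW0 _ hx2
      have hsq : Real.sqrt (W x * W (x - 2)) ≤ (W x + W (x - 2)) / 2 := by
        rw [show (W x + W (x-2))/2 = Real.sqrt (((W x + W (x-2))/2)^2) by
          rw [Real.sqrt_sq (by positivity)]]
        apply Real.sqrt_le_sqrt
        nlinarith [sq_nonneg (W x - W (x - 2))]
      have h3 : W (x - 2) ≤ M := hMb _ (by linarith [hx.1])
      calc deriv W x ≤ -2 * lam * W x + lam * Real.sqrt (W x * W (x - 2)) := hineq x hxK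
        _ ≤ -2 * lam * W x + lam * ((W x + W (x - 2)) / 2) := by nlinarith
        _ ≤ -μ * W x + lam * M / 2 := by rw [hμdef]; nlinarith
    have hWa : W a ≤ M := hMb a (by linarith)
    have := le_gronwallBound_of_liminf_deriv_right_le
      (f := W) (f' := deriv W) (δ := M) (K := -μ) (ε := lam * M / 2) (a := a) (b := t)
      (hdiff.continuous.continuousOn)
      (fun x _ r hr => hslope x r hr) hWa hbound t ⟨hat, le_rfl⟩
    rw [gronwallBound_of_K_ne_0 (by linarith : -μ ≠ 0)] at this
    have hexp : Real.exp (-μ * (t - a)) ≤ 1 := by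
      apply Real.exp_le_one_iff.mpr; nlinarith
    calc W t ≤ M * Real.exp (-μ * (t - a)) + lam * M / 2 / (-μ) * (Real.exp (-μ * (t - a)) - 1) :=
          this
      _ = M * Real.exp (-μ * (t - a)) + (M / 3) * (1 - Real.exp (-μ * (t - a))) := by
          field_simp; ring
      _ ≤ M * Real.exp (-μ * (t - a)) + M / 3 := by nlinarith [Real.exp_nonneg (-μ * (t - a))]
  -- length of each step
  set T : ℝ := Real.log 6 / μ with hTdef
  have hT0 : 0 < T := div_pos (Real.log_pos (by norm_num)) hμ
  set L : ℝ := 2 + T with hLdef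
  have hL0 : 0 < L := by linarith
  -- induction
  have P : ∀ n : ℕ, ∀ t, K₁ + n * L ≤ t → W t ≤ K₀ / 2 ^ n := by
    intro n
    induction n with
    | zero => intro t ht; simpa using hWK t (by push_cast at ht; linarith)
    | succ n ih =>
      intro t ht
      push_cast at ht
      set a : ℝ := K₁ + n * L + 2 with hadef
      have hnL : 0 ≤ (n:ℝ) * L := by positivity
      have h1 : K₁ ≤ a := by linarith
      have h2 : a ≤ t := by linarith
      have hM0 : 0 ≤ K₀ / 2 ^ n := by positivity
      have hMb : ∀ s, a - 2 ≤ s → W s ≤ K₀ / 2 ^ n := fun s hs => ih s (by linarith)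
      have hk := key (K₀ / 2 ^ n) a t h1 h2 hM0 hMb
      have hexp : Real.exp (-μ * (t - a)) ≤ 1 / 6 := by
        have hta : T ≤ t - a := by linarith
        have : -μ * (t - a) ≤ -Real.log 6 := by
          rw [hTdef] at hta
          rw [div_le_iff₀ hμ] at hta
          nlinarith
        calc Real.exp (-μ * (t - a)) ≤ Real.exp (-Real.log 6) := Real.exp_le_exp.mpr this
          _ = 1 / 6 := by rw [Real.exp_neg, Real.exp_log (by norm_num)]; norm_num
      have : W t ≤ (K₀ / 2 ^ n) * (1/6) + (K₀ / 2 ^ n) / 3 := by nlinarith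
      calc W t ≤ (K₀ / 2 ^ n) * (1/6) + (K₀ / 2 ^ n) / 3 := this
        _ = K₀ / 2 ^ (n + 1) := by rw [pow_succ]; ring
  -- conclusion
  set κ : ℝ := Real.log 2 / L with hκdef
  have hκ0 : 0 < κ := div_pos (Real.log_pos (by norm_num)) hL0
  refine ⟨2 * K₀ * Real.exp (κ * K₁), κ, hκ0, ?_⟩
  intro t ht
  rcases le_or_gt t K₁ with htK | htK
  · have h1 : W t ≤ K₀ := hWK t ht
    have h2 : 2 * K₀ * Real.exp (κ * K₁) * Real.exp (-κ * t) = 2 * K₀ * Real.exp (κ * (K₁ - t)) := by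
      rw [mul_assoc, ← Real.exp_add]; ring_nf
    have h3 : (1:ℝ) ≤ Real.exp (κ * (K₁ - t)) := Real.one_le_exp (by nlinarith)
    rw [h2]; nlinarith
  · set n : ℕ := ⌊(t - K₁) / L⌋₊ with hndef
    have hn1 : (n : ℝ) ≤ (t - K₁) / L := Nat.floor_le (div_nonneg (by linarith) hL0.le)
    have hn2 : (t - K₁) / L < n + 1 := Nat.lt_floor_add_one _
    have ht1 : K₁ + n * L ≤ t := by
      rw [le_div_iff₀ hL0] at hn1; linarith
    have hWt : W t ≤ K₀ / 2 ^ n := P n t ht1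
    have hlog2 : (0:ℝ) < Real.log 2 := Real.log_pos (by norm_num)
    have e1 : (2:ℝ)⁻¹ ^ (n+1) ≤ Real.exp (κ * (K₁ - t)) := by
      rw [show ((2:ℝ)⁻¹) = Real.exp (-Real.log 2) by
        rw [Real.exp_neg, Real.exp_log]; norm_num, ← Real.exp_nat_mul]
      apply Real.exp_le_exp.mpr
      rw [div_lt_iff₀ hL0] at hn2
      have hκL : κ * L = Real.log 2 := by
        rw [hκdef]; field_simp
      push_cast
      nlinarith
    have e2 : K₀ / 2 ^ n = K₀ * 2 * (2:ℝ)⁻¹ ^ (n+1) := by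
      rw [pow_succ]
      field_simp
      rw [one_div, mul_assoc, ← mul_pow, mul_inv_cancel₀ (two_ne_zero' ℝ), one_pow, mul_one]
    have h2 : 2 * K₀ * Real.exp (κ * K₁) * Real.exp (-κ * t) = 2 * K₀ * Real.exp (κ * (K₁ - t)) := by
      rw [mul_assoc, ← Real.exp_add]; ring_nf
    rw [h2]
    calc W t ≤ K₀ / 2 ^ n := hWt
      _ = K₀ * 2 * (2:ℝ)⁻¹ ^ (n+1) := e2
      _ ≤ 2 * K₀ * Real.exp (κ * (K₁ - t)) := by nlinarith
end

section
/- Let W : [0,∞) → ℝ be a nonnegative C¹ function with W(t) ≤ K₀, and suppose that for constants λ > 0, N ∈ ℕ, ν₀,…,ν_N ≥ 0 with (1/2)∑_{j=0}^N ν_j = 1 and K₁ ≥ 2N, we have W'(t) ≤ -2λ W(t) + λ ∏_{j=0}^N W(t-2j)^{ν_j/2} for all t ≥ K₁. Then there exist constants C and κ > 0, depending only on K₀, K₁, λ, N and the ν_j, such that W(t) ≤ C e^{-κ t} for all t ≥ 0. -/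
lemma gronwall_step (W : ℝ → ℝ) (lam B t₀ : ℝ)
    (hW : ContDiff ℝ 1 W)
    (hd : ∀ x > t₀, deriv W x ≤ -2 * lam * W x + lam * B) :
    ∀ t ≥ t₀, W t ≤ (W t₀ - B / 2) * Real.exp (-(2 * lam) * (t - t₀)) + B / 2 := by
  set g : ℝ → ℝ := fun x => (W x - B / 2) * Real.exp (2 * lam * (x - t₀)) with hg
  have hWdiff : Differentiable ℝ W := hW.differentiable one_ne_zero
  have hgd : ∀ x : ℝ, HasDerivAt g
      (deriv W x * Real.exp (2 * lam * (x - t₀)) +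
        (W x - B / 2) * (Real.exp (2 * lam * (x - t₀)) * (2 * lam))) x := by
    intro x
    have h1 : HasDerivAt (fun x : ℝ => W x - B / 2) (deriv W x) x :=
      ((hWdiff x).hasDerivAt).sub_const _
    have h2 : HasDerivAt (fun x : ℝ => 2 * lam * (x - t₀)) (2 * lam) x := by
      simpa using (((hasDerivAt_id x).sub_const t₀).const_mul (2 * lam))
    exact h1.mul h2.exp
  have hanti : AntitoneOn g (Set.Ici t₀) := by
    apply antitoneOn_of_deriv_nonpos (convex_Ici t₀)
    · exact ((hW.continuous.sub continuous_const).mul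
        (Real.continuous_exp.comp (by continuity))).continuousOn
    · intro x hx
      exact ((hgd x).differentiableAt).differentiableWithinAt
    · intro x hx
      rw [interior_Ici] at hx
      rw [(hgd x).deriv]
      have hdx := hd x hx
      have hE : (0:ℝ) < Real.exp (2 * lam * (x - t₀)) := Real.exp_pos _
      nlinarith [hE, hdx]
  intro t ht
  have hmono := hanti (Set.self_mem_Ici) ht ht
  have hgt0 : g t₀ = W t₀ - B / 2 := by simp [hg]
  have hE : (0:ℝ) < Real.exp (2 * lam * (t - t₀)) := Real.exp_pos _
  have key : (W t - B / 2) * Real.exp (2 * lam * (t - t₀)) ≤ W t₀ - B / 2 := by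
    simpa [hg, hgt0] using hmono
  have hinv : Real.exp (-(2 * lam) * (t - t₀)) = (Real.exp (2 * lam * (t - t₀)))⁻¹ := by
    rw [← Real.exp_neg]; ring_nf
  have : W t - B / 2 ≤ (W t₀ - B / 2) * Real.exp (-(2 * lam) * (t - t₀)) := by
    rw [hinv, ← div_eq_mul_inv, le_div_iff₀ hE]
    exact key
  linarith

theorem decay_lemma
    (W : ℝ → ℝ) (K₀ K₁ lam : ℝ) (N : ℕ) (ν : ℕ → ℝ)
    (hlam : 0 < lam) (hK₁ : (2 * N : ℝ) ≤ K₁)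
    (hν0 : ∀ j ≤ N, 0 ≤ ν j)
    (hνsum : (1 / 2) * ∑ j ∈ Finset.range (N + 1), ν j = 1)
    (hW : ContDiff ℝ 1 W)
    (hW0 : ∀ t ≥ (0:ℝ), 0 ≤ W t)
    (hWK : ∀ t ≥ (0:ℝ), W t ≤ K₀)
    (hineq : ∀ t ≥ K₁, deriv W t ≤ -2 * lam * W t +
      lam * ∏ j ∈ Finset.range (N + 1), W (t - 2 * j) ^ (ν j / 2)) :
    ∃ C κ : ℝ, 0 < κ ∧ ∀ t ≥ (0:ℝ), W t ≤ C * Real.exp (-κ * t) := by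
  -- trivial case K₀ ≤ 0 : W ≡ 0 on [0,∞)
  rcases le_or_gt K₀ 0 with hK0 | hK0
  · refine ⟨1, 1, one_pos, fun t ht => ?_⟩
    have h1 : W t ≤ 0 := le_trans (hWK t ht) hK0
    have h2 : (0:ℝ) < Real.exp (-1 * t) := Real.exp_pos _
    linarith
  -- main case
  have hN0 : (0:ℝ) ≤ 2 * N := by positivity
  have hK₁0 : (0:ℝ) ≤ K₁ := le_trans hN0 hK₁
  have hlog2 : (0:ℝ) < Real.log 2 := Real.log_pos (by norm_num)
  set δ : ℝ := Real.log 2 / (2 * lam) with hδ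
  have hδpos : 0 < δ := by positivity
  set L : ℝ := 2 * N + δ with hL
  have hLpos : 0 < L := by positivity
  -- key induction
  have key : ∀ k : ℕ, ∀ t : ℝ, K₁ + k * L - 2 * N ≤ t → W t ≤ K₀ * (3 / 4) ^ k := by
    intro k
    induction k with
    | zero =>
      intro t ht
      simp only [Nat.cast_zero, zero_mul, add_zero, pow_zero, mul_one] at *
      exact hWK t (by linarith)
    | succ k ih =>
      intro t ht
      set B : ℝ := K₀ * (3 / 4) ^ k with hB
      have hBpos : 0 < B := by positivity
      set t₀ : ℝ := K₁ + k * L with ht₀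
      have hkL : (0:ℝ) ≤ k * L := by positivity
      have ht₀K₁ : K₁ ≤ t₀ := by simp [ht₀]; positivity
      have hd : ∀ x > t₀, deriv W x ≤ -2 * lam * W x + lam * B := by
        intro x hx
        have hx1 : K₁ ≤ x := le_trans ht₀K₁ hx.le
        have hprod : ∏ j ∈ Finset.range (N + 1), W (x - 2 * j) ^ (ν j / 2) ≤ B := by
          have step1 : ∏ j ∈ Finset.range (N + 1), W (x - 2 * j) ^ (ν j / 2)
              ≤ ∏ j ∈ Finset.range (N + 1), B ^ (ν j / 2) := by
            apply Finset.prod_le_prod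
            · intro j hj
              have hjN : (j:ℝ) ≤ N := by
                exact_mod_cast Finset.mem_range_succ_iff.mp hj
              have hx2 : (0:ℝ) ≤ x - 2 * j := by linarith
              exact Real.rpow_nonneg (hW0 _ hx2) _
            · intro j hj
              have hjN' : j ≤ N := Finset.mem_range_succ_iff.mp hj
              have hjN : (j:ℝ) ≤ N := by exact_mod_cast hjN'
              have hx2 : (0:ℝ) ≤ x - 2 * j := by linarith
              have hx3 : K₁ + k * L - 2 * N ≤ x - 2 * j := by linarith
              exact Real.rpow_le_rpow (hW0 _ hx2) (ih _ hx3)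
                (div_nonneg (hν0 j hjN') (by norm_num))
          have step2 : ∏ j ∈ Finset.range (N + 1), B ^ (ν j / 2) = B := by
            have hsum : ∑ j ∈ Finset.range (N + 1), ν j / 2 = 1 := by
              rw [← Finset.sum_div]; linarith
            rw [Finset.prod_congr rfl
              (fun j _ => Real.rpow_def_of_pos hBpos (ν j / 2)),
              ← Real.exp_sum, ← Finset.mul_sum, hsum, mul_one, Real.exp_log hBpos]
          calc ∏ j ∈ Finset.range (N + 1), W (x - 2 * j) ^ (ν j / 2)
              ≤ ∏ j ∈ Finset.range (N + 1), B ^ (ν j / 2) := step1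
            _ = B := step2
        have := hineq x hx1
        nlinarith [this, hprod, hlam]
      have htt₀ : t₀ + δ ≤ t := by
        have : (k:ℝ) + 1 = ((k+1 : ℕ) : ℝ) := by push_cast; ring
        have hexp : K₁ + ((k:ℝ) + 1) * L - 2 * N = t₀ + δ := by
          simp only [ht₀, hL]; ring
        rw [this] at hexp
        linarith [ht, hexp.symm.le]
      have ht₀t : t₀ ≤ t := by linarith
      have hgron := gronwall_step W lam B t₀ hW hd t ht₀t
      have hWt₀ : W t₀ ≤ B := ih t₀ (by linarith)
      have hEle : Real.exp (-(2 * lam) * (t - t₀)) ≤ 1 / 2 := by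
        have h1 : Real.log 2 ≤ 2 * lam * (t - t₀) := by
          have h2lam : (0:ℝ) < 2 * lam := by positivity
          have h3 : Real.log 2 / (2 * lam) ≤ t - t₀ := by rw [hδ] at htt₀; linarith
          rw [div_le_iff₀ h2lam] at h3
          linarith
        have : Real.exp (-(2 * lam) * (t - t₀)) ≤ Real.exp (-(Real.log 2)) :=
          Real.exp_le_exp.mpr (by linarith)
        rw [Real.exp_neg, Real.exp_log (by norm_num : (0:ℝ) < 2)] at this
        linarith
      have hEpos : 0 < Real.exp (-(2 * lam) * (t - t₀)) := Real.exp_pos _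
      have hgoal : K₀ * (3 / 4) ^ (k + 1) = B * (3 / 4) := by
        rw [hB, pow_succ]; ring
      rw [hgoal]
      nlinarith [mul_le_mul_of_nonneg_right (sub_le_sub_right hWt₀ (B / 2)) hEpos.le,
        mul_le_mul_of_nonneg_left hEle (by linarith : (0:ℝ) ≤ B / 2)]
  -- assemble the exponential bound
  have hlog43 : (0:ℝ) < Real.log (4 / 3) := Real.log_pos (by norm_num)
  set κ : ℝ := Real.log (4 / 3) / L with hκ
  have hκpos : 0 < κ := by positivity
  refine ⟨K₀ * Real.exp (κ * (K₁ - 2 * N + L)), κ, hκpos, fun t ht => ?_⟩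
  have hpow : ∀ k : ℕ, ((3:ℝ) / 4) ^ k = Real.exp (-(Real.log (4 / 3)) * k) := by
    intro k
    have h34 : ((3:ℝ) / 4) = Real.exp (-(Real.log (4 / 3))) := by
      rw [← Real.log_inv, Real.exp_log (by norm_num)]
      norm_num
    rw [h34, ← Real.exp_nat_mul]
    ring_nf
  rcases lt_or_ge t (K₁ - 2 * N) with hcase | hcase
  · -- small t : use boundedness
    have h1 : W t ≤ K₀ := hWK t ht
    have h2 : (1:ℝ) ≤ Real.exp (κ * (K₁ - 2 * N + L)) * Real.exp (-κ * t) := by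
      rw [← Real.exp_add]
      apply Real.one_le_exp
      nlinarith
    calc W t ≤ K₀ := h1
      _ = K₀ * 1 := by ring
      _ ≤ K₀ * (Real.exp (κ * (K₁ - 2 * N + L)) * Real.exp (-κ * t)) :=
          mul_le_mul_of_nonneg_left h2 hK0.le
      _ = K₀ * Real.exp (κ * (K₁ - 2 * N + L)) * Real.exp (-κ * t) := by ring
  · -- large t : pick k = ⌊(t - (K₁ - 2N)) / L⌋
    set s : ℝ := (t - (K₁ - 2 * N)) / L with hs
    have hs0 : 0 ≤ s := by
      rw [hs]; exact div_nonneg (by linarith) hLpos.le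
    set k : ℕ := ⌊s⌋₊ with hk
    have hfle : (k:ℝ) ≤ s := Nat.floor_le hs0
    have hflt : s < (k:ℝ) + 1 := Nat.lt_floor_add_one s
    have hsL : s * L = t - (K₁ - 2 * N) := by
      rw [hs]; field_simp
    have hk1 : (k:ℝ) * L ≤ t - (K₁ - 2 * N) := by
      rw [← hsL]; exact mul_le_mul_of_nonneg_right hfle hLpos.le
    have hk2 : t - (K₁ - 2 * N) < ((k:ℝ) + 1) * L := by
      rw [← hsL]; exact mul_lt_mul_of_pos_right hflt hLpos
    have hWt := key k t (by linarith)
    have hle : ((3:ℝ) / 4) ^ k ≤ Real.exp (κ * (K₁ - 2 * N + L)) * Real.exp (-κ * t) := by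
      rw [hpow k, ← Real.exp_add]
      apply Real.exp_le_exp.mpr
      have hκL : κ * L = Real.log (4 / 3) := by
        rw [hκ]; field_simp
      have h5 : κ * (t - (K₁ - 2 * N)) < κ * (((k:ℝ) + 1) * L) :=
        mul_lt_mul_of_pos_left hk2 hκpos
      have h6 : κ * (((k:ℝ) + 1) * L) = Real.log (4 / 3) * ((k:ℝ) + 1) := by
        rw [← hκL]; ring
      have h7 : κ * (K₁ - 2 * N + L) = κ * (K₁ - 2 * N) + Real.log (4 / 3) := by
        rw [← hκL]; ring
      clear_value κ L s k
      linarith [h5, h6, h7]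
    calc W t ≤ K₀ * ((3:ℝ) / 4) ^ k := hWt
      _ ≤ K₀ * (Real.exp (κ * (K₁ - 2 * N + L)) * Real.exp (-κ * t)) :=
          mul_le_mul_of_nonneg_left hle hK0.le
      _ = K₀ * Real.exp (κ * (K₁ - 2 * N + L)) * Real.exp (-κ * t) := by ring
end
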